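/- arXiv:1201.4507 — 3 statements merged into one kernel-verified Lean document; each statement's English description precedes it below -/
import Mathlib

section
/- For q ≠ 1, q ≠ 2, λ ∈ ℝ, and x with 1-(1-q)λx > 0, one has -λ ∫₀ˣ exp(-λ ∫₀^{x'} (e_q(-λx''))^{q-1} dx'') dx' = (e_q(-λx))^{2-q}/(2-q) - 1/(2-q). -/
/-- -λ ∫₀ˣ exp(-λ ∫₀^{x'} (e_q(-λx''))^{q-1} dx'') dx'
    = (e_q(-λx))^{2-q}/(2-q) - 1/(2-q). -/
theorem qexp_double_integral (q lam x : ℝ) (hq1 : q ≠ 1) (hq2 : q ≠ 2)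
    (hpos : ∀ t ∈ Set.uIcc (0 : ℝ) x, 1 - (1 - q) * lam * t > 0) :
    -lam * ∫ x' in (0 : ℝ)..x,
        Real.exp (-(lam * ∫ x'' in (0 : ℝ)..x',
          ((1 - (1 - q) * lam * x'') ^ ((1 : ℝ) / (1 - q))) ^ (q - 1)))
      = ((1 - (1 - q) * lam * x) ^ ((1 : ℝ) / (1 - q))) ^ (2 - q) / (2 - q)
        - 1 / (2 - q) := by
  have hq1' : (1 : ℝ) - q ≠ 0 := sub_ne_zero.mpr (Ne.symm hq1)
  have hq2' : (2 : ℝ) - q ≠ 0 := sub_ne_zero.mpr (Ne.symm hq2)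
  rcases eq_or_ne lam 0 with rfl | hlam
  · simp [Real.one_rpow]
  have hcne : (1 - q) * lam ≠ 0 := mul_ne_zero hq1' hlam
  -- Step A: pointwise simplification of inner integrand on uIcc 0 x
  have hA : ∀ t ∈ Set.uIcc (0 : ℝ) x,
      ((1 - (1 - q) * lam * t) ^ ((1 : ℝ) / (1 - q))) ^ (q - 1)
        = (1 - (1 - q) * lam * t)⁻¹ := by
    intro t ht
    have h := hpos t ht
    rw [← Real.rpow_mul (le_of_lt h)]
    have : (1 : ℝ) / (1 - q) * (q - 1) = -1 := by field_simp; ring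
    rw [this, Real.rpow_neg_one]
  -- Step B/C: for x' ∈ uIcc 0 x, the exponential equals (1-c x')^{1/(1-q)}
  have hBC : ∀ x' ∈ Set.uIcc (0 : ℝ) x,
      Real.exp (-(lam * ∫ x'' in (0 : ℝ)..x',
          ((1 - (1 - q) * lam * x'') ^ ((1 : ℝ) / (1 - q))) ^ (q - 1)))
        = (1 - (1 - q) * lam * x') ^ ((1 : ℝ) / (1 - q)) := by
    intro x' hx'
    have hsub : Set.uIcc (0 : ℝ) x' ⊆ Set.uIcc 0 x :=
      Set.uIcc_subset_uIcc Set.left_mem_uIcc hx'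
    -- integrand congruence
    have hcong : ∫ x'' in (0 : ℝ)..x',
        ((1 - (1 - q) * lam * x'') ^ ((1 : ℝ) / (1 - q))) ^ (q - 1)
        = ∫ x'' in (0 : ℝ)..x', (1 - (1 - q) * lam * x'')⁻¹ :=
      intervalIntegral.integral_congr (fun t ht => hA t (hsub ht))
    -- FTC for the log antiderivative
    have hderiv : ∀ t ∈ Set.uIcc (0 : ℝ) x',
        HasDerivAt (fun s => -Real.log (1 - (1 - q) * lam * s) / ((1 - q) * lam))
          (1 - (1 - q) * lam * t)⁻¹ t := by
      intro t ht
      have hpt := hpos t (hsub ht)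
      have h1 : HasDerivAt (fun s : ℝ => 1 - (1 - q) * lam * s)
          (-((1 - q) * lam)) t := by
        simpa using ((hasDerivAt_id t).const_mul ((1 - q) * lam)).const_sub 1
      have h2 := (h1.log (ne_of_gt hpt)).neg.div_const ((1 - q) * lam)
      refine h2.congr_deriv ?_
      field_simp
    have hint : IntervalIntegrable (fun t => (1 - (1 - q) * lam * t)⁻¹)
        MeasureTheory.volume 0 x' := by
      apply ContinuousOn.intervalIntegrable
      apply ContinuousOn.inv₀
      · fun_prop
      · exact fun t ht => ne_of_gt (hpos t (hsub ht))
    have hFTC := intervalIntegral.integral_eq_sub_of_hasDerivAt hderiv hint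
    rw [hcong, hFTC]
    have hpx' := hpos x' hx'
    rw [Real.rpow_def_of_pos hpx']
    congr 1
    have : Real.log (1 - (1 - q) * lam * 0) = 0 := by simp
    field_simp [this]
    simp
  -- outer integral congruence
  have houter : ∫ x' in (0 : ℝ)..x,
      Real.exp (-(lam * ∫ x'' in (0 : ℝ)..x',
          ((1 - (1 - q) * lam * x'') ^ ((1 : ℝ) / (1 - q))) ^ (q - 1)))
      = ∫ x' in (0 : ℝ)..x, (1 - (1 - q) * lam * x') ^ ((1 : ℝ) / (1 - q)) :=
    intervalIntegral.integral_congr hBC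
  -- Step D: FTC for the outer integral
  have hderiv2 : ∀ t ∈ Set.uIcc (0 : ℝ) x,
      HasDerivAt (fun s => -(1 - (1 - q) * lam * s) ^ ((2 - q) / (1 - q))
          / ((2 - q) * lam))
        ((1 - (1 - q) * lam * t) ^ ((1 : ℝ) / (1 - q))) t := by
    intro t ht
    have hpt := hpos t ht
    have h1 : HasDerivAt (fun s : ℝ => 1 - (1 - q) * lam * s)
        (-((1 - q) * lam)) t := by
      simpa using ((hasDerivAt_id t).const_mul ((1 - q) * lam)).const_sub 1
    have h2 := ((h1.rpow_const (p := (2 - q) / (1 - q)) (Or.inl (ne_of_gt hpt))).neg).div_const ((2 - q) * lam)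
    have hexp : (2 - q) / (1 - q) - 1 = (1 : ℝ) / (1 - q) := by
      field_simp
      ring
    refine h2.congr_deriv ?_
    rw [hexp]
    field_simp
  have hint2 : IntervalIntegrable
      (fun t => (1 - (1 - q) * lam * t) ^ ((1 : ℝ) / (1 - q)))
      MeasureTheory.volume 0 x := by
    apply ContinuousOn.intervalIntegrable
    apply ContinuousOn.rpow_const
    · fun_prop
    · exact fun t ht => Or.inl (ne_of_gt (hpos t ht))
  have hFTC2 := intervalIntegral.integral_eq_sub_of_hasDerivAt hderiv2 hint2
  rw [houter, hFTC2]
  -- final algebra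
  have hpx := hpos x Set.right_mem_uIcc
  rw [← Real.rpow_mul (le_of_lt hpx)]
  have he : (1 : ℝ) / (1 - q) * (2 - q) = (2 - q) / (1 - q) := by ring
  rw [he]
  simp only [mul_zero, sub_zero, Real.one_rpow]
  field_simp
  ring
end

section
/- For q ≠ 1, q ≠ 2, λ ∈ ℝ, differentiable h, and any constant c, the function g(x) = (e_q(-λh(x)))^{-1} · ( (e_q(-λh(x)))^{2-q}/(2-q) + c ) solves g'(x) - λ (e_q(-λh(x)))^{q-1} h'(x) g(x) + λ h'(x) = 0 wherever 1-(1-q)λh(x) > 0. -/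
/-- g(x) = (e_q(-λh(x)))⁻¹ · ((e_q(-λh(x)))^{2-q}/(2-q) + c) solves
    g'(x) - λ (e_q(-λh(x)))^{q-1} h'(x) g(x) + λ h'(x) = 0
    wherever 1-(1-q)λh(x) > 0. -/
theorem g_general_solves_ode_general_constraint (q lam c : ℝ) (h : ℝ → ℝ) (h' : ℝ → ℝ)
    (hq1 : q ≠ 1) (hq2 : q ≠ 2)
    (hh : ∀ x, HasDerivAt h (h' x) x) :
    ∀ x : ℝ, 1 - (1 - q) * lam * h x > 0 →
      ∃ d : ℝ,
        HasDerivAt (fun y : ℝ =>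
          ((1 - (1 - q) * lam * h y) ^ ((1 : ℝ) / (1 - q))) ^ (-1 : ℝ) *
            (((1 - (1 - q) * lam * h y) ^ ((1 : ℝ) / (1 - q))) ^ (2 - q) / (2 - q) + c)) d x ∧
        d - lam * (((1 - (1 - q) * lam * h x) ^ ((1 : ℝ) / (1 - q))) ^ (q - 1)) * h' x
              * (((1 - (1 - q) * lam * h x) ^ ((1 : ℝ) / (1 - q))) ^ (-1 : ℝ) *
                 (((1 - (1 - q) * lam * h x) ^ ((1 : ℝ) / (1 - q))) ^ (2 - q) / (2 - q) + c))
          + lam * h' x = 0 := by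
  intro x hx
  have hq1' : (1 : ℝ) - q ≠ 0 := sub_ne_zero_of_ne (Ne.symm hq1)
  have hq2' : (2 : ℝ) - q ≠ 0 := sub_ne_zero_of_ne (Ne.symm hq2)
  set u : ℝ → ℝ := fun y => 1 - (1 - q) * lam * h y with hu_def
  have hux : 0 < u x := hx
  have hu : HasDerivAt u (-((1 - q) * lam * h' x)) x := by
    simpa using ((hh x).const_mul ((1 - q) * lam)).const_sub 1
  set α : ℝ := (1 : ℝ) / (1 - q) * (-1) with hα
  set β : ℝ := (1 : ℝ) / (1 - q) * (2 - q) with hβ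
  have hA : HasDerivAt (fun y => u y ^ α)
      (-((1 - q) * lam * h' x) * α * u x ^ (α - 1)) x :=
    hu.rpow_const (Or.inl hux.ne')
  have hB : HasDerivAt (fun y => u y ^ β)
      (-((1 - q) * lam * h' x) * β * u x ^ (β - 1)) x :=
    hu.rpow_const (Or.inl hux.ne')
  have hF : HasDerivAt (fun y => u y ^ α * (u y ^ β / (2 - q) + c))
      ((-((1 - q) * lam * h' x) * α * u x ^ (α - 1)) * (u x ^ β / (2 - q) + c)
        + u x ^ α * (-((1 - q) * lam * h' x) * β * u x ^ (β - 1) / (2 - q))) x :=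
    hA.mul ((hB.div_const (2 - q)).add_const c)
  have hev : ∀ᶠ y in nhds x, (0 : ℝ) < u y :=
    hu.continuousAt.eventually (eventually_gt_nhds hux)
  have heq : (fun y : ℝ =>
      ((1 - (1 - q) * lam * h y) ^ ((1 : ℝ) / (1 - q))) ^ (-1 : ℝ) *
        (((1 - (1 - q) * lam * h y) ^ ((1 : ℝ) / (1 - q))) ^ (2 - q) / (2 - q) + c))
      =ᶠ[nhds x] (fun y => u y ^ α * (u y ^ β / (2 - q) + c)) := by
    filter_upwards [hev] with y hy
    rw [hα, hβ, Real.rpow_mul hy.le, Real.rpow_mul hy.le]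
  refine ⟨_, hF.congr_of_eventuallyEq heq, ?_⟩
  have hγ : ((1 : ℝ) / (1 - q)) * (q - 1) = -1 := by field_simp; ring
  rw [show ((1 - (1 - q) * lam * h x) ^ ((1 : ℝ) / (1 - q))) ^ (q - 1)
        = u x ^ (-1 : ℝ) by rw [← Real.rpow_mul hux.le, hγ],
      show ((1 - (1 - q) * lam * h x) ^ ((1 : ℝ) / (1 - q))) ^ (-1 : ℝ)
        = u x ^ α by rw [← Real.rpow_mul hux.le, hα],
      show ((1 - (1 - q) * lam * h x) ^ ((1 : ℝ) / (1 - q))) ^ (2 - q)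
        = u x ^ β by rw [← Real.rpow_mul hux.le, hβ]]
  have e1 : -((1 - q) * lam * h' x) * α = lam * h' x := by
    rw [hα]; field_simp
  have e2 : -((1 - q) * lam * h' x) * β / (2 - q) = -(lam * h' x) := by
    rw [hβ]; field_simp
  have e3 : u x ^ α * u x ^ (β - 1) = 1 := by
    rw [← Real.rpow_add hux]
    have : α + (β - 1) = 0 := by rw [hα, hβ]; field_simp; ring
    rw [this, Real.rpow_zero]
  have e4 : u x ^ (-1 : ℝ) * u x ^ α = u x ^ (α - 1) := by
    rw [← Real.rpow_add hux]; ring_nf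
  set P := u x ^ α
  set R := u x ^ (α - 1)
  set Q := u x ^ β
  set S := u x ^ (β - 1)
  set T := u x ^ (-1 : ℝ)
  linear_combination (Q / (2 - q) + c) * R * e1 + P * S * e2 - lam * h' x * e3
    - lam * h' x * (Q / (2 - q) + c) * e4
end

section
/- For q ≠ 1, q ≠ 2, λ ∈ ℝ, the function g(x) = (1-(1-q)λx²)/(2-q) solves g'(x) - 2λx (e_q(-λx²))^{q-1} g(x) + 2λx = 0 wherever 1-(1-q)λx² > 0. -/
/-- Variance constraint h(x) = x²: g(x) = (1-(1-q)λx²)/(2-q) solves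
    g'(x) - 2λx (e_q(-λx²))^{q-1} g(x) + 2λx = 0 wherever 1-(1-q)λx² > 0. -/
theorem g_solves_ode_variance (q lam : ℝ) (hq1 : q ≠ 1) (hq2 : q ≠ 2) :
    ∀ x : ℝ, 1 - (1 - q) * lam * x ^ 2 > 0 →
      ∃ d : ℝ, HasDerivAt (fun y : ℝ => (1 - (1 - q) * lam * y ^ 2) / (2 - q)) d x ∧
        d - 2 * lam * x * (((1 - (1 - q) * lam * x ^ 2) ^ ((1 : ℝ) / (1 - q))) ^ (q - 1))
              * ((1 - (1 - q) * lam * x ^ 2) / (2 - q)) + 2 * lam * x = 0 := by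
  intro x hx
  set A := 1 - (1 - q) * lam * x ^ 2 with hA
  refine ⟨-((1 - q) * lam * (2 * x)) / (2 - q), ?_, ?_⟩
  · have h : HasDerivAt (fun y : ℝ => 1 - (1 - q) * lam * y ^ 2)
        (-((1 - q) * lam * (2 * x))) x := by
      have := ((hasDerivAt_pow 2 x).const_mul ((1 - q) * lam)).const_sub 1
      simpa using this
    exact h.div_const _
  · have hApow : (A ^ ((1 : ℝ) / (1 - q))) ^ (q - 1) = A⁻¹ := by
      rw [← Real.rpow_natCast] at *
      rw [← Real.rpow_mul hx.le]
      have h1q : (1 : ℝ) - q ≠ 0 := sub_ne_zero.mpr (Ne.symm hq1)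
      have : (1 : ℝ) / (1 - q) * (q - 1) = -1 := by
        field_simp
        ring
      rw [this, Real.rpow_neg_one]
    rw [hApow]
    have hq2' : (2 : ℝ) - q ≠ 0 := sub_ne_zero.mpr (Ne.symm hq2)
    field_simp
    ring
end
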